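/- Let φ be a unit vector in a finite-dimensional complex Hilbert space H and let X be a self-adjoint linear operator on H, and write Φ(·) = ⟨φ, · φ⟩, m_n = Φ(X^n). Then the norm of A(ε) = |φ⟩⟨φ| + εX satisfies the second-order expansion ‖A(ε)‖ = 1 + ε·m_1 + ε²·(m_2 − m_1²) + o(ε²) as ε → 0. -/

import Mathlib

open Filter Asymptotics
open scoped InnerProductSpace Topology

lemma quad_aux {s W e δ : ℝ} (hs : 0 ≤ s) (hW : 0 ≤ W) (he : 0 ≤ e) (hδ : 0 ≤ δ)
    (hδ2 : δ ≤ 1/2) : 2*e*s*W - (1-δ)*s^2 ≤ e^2*W^2*(1+2*δ) := by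
  nlinarith [sq_nonneg ((1-δ)*s - e*W),
    mul_nonneg (mul_nonneg (mul_nonneg he hW) (mul_nonneg he hW))
      (mul_nonneg hδ (by linarith : (0:ℝ) ≤ 1 - 2*δ))]

lemma aux_norm_le {H : Type*} [NormedAddCommGroup H] [InnerProductSpace ℂ H]
    [FiniteDimensional ℂ H] (T : H →L[ℂ] H) (hT : IsSelfAdjoint T) {c : ℝ} (hc : 0 ≤ c)
    (h : ∀ ψ : H, ‖ψ‖ = 1 → |(⟪ψ, T ψ⟫_ℂ).re| ≤ c) : ‖T‖ ≤ c := by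
  have hsymm : (T : H →ₗ[ℂ] H).IsSymmetric := hT.isSymmetric
  set b := hsymm.eigenvectorBasis rfl with hb
  set μ := hsymm.eigenvalues rfl with hμ
  have heig : ∀ i, |μ i| ≤ c := by
    intro i
    have hunit : ‖b i‖ = 1 := b.orthonormal.1 i
    have happ : T (b i) = (μ i : ℂ) • b i := hsymm.apply_eigenvectorBasis rfl i
    have h2 := h (b i) hunit
    rw [happ, inner_smul_right, inner_self_eq_norm_sq_to_K, hunit] at h2
    simpa using h2
  have hrep : ∀ y : H, ‖y‖ ^ 2 = ∑ i, ‖b.repr y i‖ ^ 2 := by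
    intro y
    rw [← b.repr.norm_map y, EuclideanSpace.norm_eq, Real.sq_sqrt (by positivity)]
  refine T.opNorm_le_bound hc fun x => ?_
  have hTx : ∀ i, b.repr (T x) i = (μ i : ℂ) * b.repr x i := by
    intro i
    rw [b.repr_apply_apply, b.repr_apply_apply]
    have h1 := hsymm (b i) x
    simp only [ContinuousLinearMap.coe_coe] at h1
    have happ : T (b i) = (μ i : ℂ) • b i := hsymm.apply_eigenvectorBasis rfl i
    rw [← h1, happ, inner_smul_left, Complex.conj_ofReal]
  have hsq : ‖T x‖ ^ 2 ≤ (c * ‖x‖) ^ 2 := by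
    calc ‖T x‖ ^ 2 = ∑ i, ‖(μ i : ℂ) * b.repr x i‖ ^ 2 := by
          rw [hrep]; exact Finset.sum_congr rfl fun i _ => by rw [hTx]
      _ ≤ ∑ i, c ^ 2 * ‖b.repr x i‖ ^ 2 := by
          refine Finset.sum_le_sum fun i _ => ?_
          rw [norm_mul, mul_pow, Complex.norm_real, Real.norm_eq_abs]
          have : |μ i| ^ 2 ≤ c ^ 2 := by
            have := heig i
            nlinarith [abs_nonneg (μ i)]
          nlinarith [norm_nonneg (b.repr x i), sq_nonneg (‖b.repr x i‖)]
      _ = (c * ‖x‖) ^ 2 := by rw [← Finset.mul_sum, ← hrep]; ring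
  have h1 : (0:ℝ) ≤ c * ‖x‖ := mul_nonneg hc (norm_nonneg x)
  nlinarith [norm_nonneg (T x)]

set_option maxHeartbeats 16000000

theorem stmt4 {H : Type*} [NormedAddCommGroup H] [InnerProductSpace ℂ H]
    [FiniteDimensional ℂ H]
    (φ : H) (hφ : ‖φ‖ = 1) (X : H →L[ℂ] H) (hX : IsSelfAdjoint X)
    (A : ℝ → (H →L[ℂ] H))
    (hA : ∀ ε : ℝ, A ε = (innerSL ℂ φ).smulRight φ + (ε : ℂ) • X)
    (m₁ m₂ : ℝ)
    (hm₁ : m₁ = (⟪φ, X φ⟫_ℂ).re) (hm₂ : m₂ = (⟪φ, X (X φ)⟫_ℂ).re) :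
    (fun ε : ℝ => ‖A ε‖ - (1 + ε * m₁ + ε ^ 2 * (m₂ - m₁ ^ 2)))
      =o[𝓝 0] (fun ε : ℝ => ε ^ 2) := by
  have hsym : ∀ x y : H, ⟪X x, y⟫_ℂ = ⟪x, X y⟫_ℂ := fun x y => by
    have := hX.isSymmetric x y
    simpa using this
  have hφφ : ⟪φ, φ⟫_ℂ = 1 := by
    rw [inner_self_eq_norm_sq_to_K, hφ]; norm_num
  have hφX : ⟪φ, X φ⟫_ℂ = (m₁ : ℂ) := by
    have hconj : (starRingEnd ℂ) ⟪φ, X φ⟫_ℂ = ⟪φ, X φ⟫_ℂ := by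
      rw [inner_conj_symm, hsym]
    rw [Complex.conj_eq_iff_re] at hconj
    rw [← hconj, hm₁]
  have hXφ : ⟪X φ, φ⟫_ℂ = (m₁ : ℂ) := by rw [hsym, hφX]
  have hXX : ⟪X φ, X φ⟫_ℂ = (m₂ : ℂ) := by
    have h1 : ⟪X φ, X φ⟫_ℂ = ⟪φ, X (X φ)⟫_ℂ := hsym φ (X φ)
    have hconj : (starRingEnd ℂ) ⟪X φ, X φ⟫_ℂ = ⟪X φ, X φ⟫_ℂ := inner_conj_symm _ _
    rw [Complex.conj_eq_iff_re] at hconj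
    rw [← hconj, h1, hm₂]
  have hφXX : ⟪φ, X (X φ)⟫_ℂ = (m₂ : ℂ) := by rw [← hsym, hXX]
  set w : H := X φ - (m₁ : ℂ) • φ with hw
  set b2 : ℝ := m₂ - m₁ ^ 2 with hb2
  have hXφw : X φ = w + (m₁ : ℂ) • φ := by rw [hw]; abel
  have hφw : ⟪φ, w⟫_ℂ = 0 := by
    rw [hw, inner_sub_right, inner_smul_right, hφφ, hφX]; ring
  have hwφ : ⟪w, φ⟫_ℂ = 0 := by
    rw [← inner_conj_symm, hφw, map_zero]
  have hww : ⟪w, w⟫_ℂ = (b2 : ℂ) := by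
    rw [hw, inner_sub_left, inner_sub_right, inner_sub_right, inner_smul_left,
      inner_smul_right, inner_smul_right, inner_smul_left, hφφ, hφX, hXφ, hXX,
      Complex.conj_ofReal, hb2]
    push_cast; ring
  have hwnorm : ‖w‖ ^ 2 = b2 := by
    have h1 := InnerProductSpace.norm_sq_eq_re_inner (𝕜 := ℂ) w
    rw [hww] at h1
    simpa using h1
  have hb2nn : 0 ≤ b2 := hwnorm ▸ sq_nonneg _
  have hXw : ⟪X φ, w⟫_ℂ = (b2 : ℂ) := by
    rw [hXφw, inner_add_left, inner_smul_left, hφw, hww]; ring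
  have hwX : ⟪w, X φ⟫_ℂ = (b2 : ℂ) := by
    rw [hXφw, inner_add_right, inner_smul_right, hwφ, hww]; ring
  have hφXw : ⟪φ, X w⟫_ℂ = (b2 : ℂ) := by rw [← hsym, hXw]
  clear_value w b2
  set M : ℝ := |m₁| + ‖X‖ + 1 with hM
  have hMpos : 0 < M := by positivity
  set C : ℝ := ‖X‖ * b2 + |m₁| * b2 + b2 ^ 2 + 2 * b2 * M + 1 with hC
  have hCpos : 0 < C := by positivity
  set ε₀ : ℝ := min 1 (1 / (2 * M)) with hε₀
  have hε₀pos : 0 < ε₀ := lt_min one_pos (by positivity)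
  clear_value M C ε₀
  -- the key pointwise estimate
  have hkey : ∀ ε : ℝ, |ε| ≤ ε₀ → |‖A ε‖ - (1 + ε * m₁ + ε ^ 2 * b2)| ≤ C * |ε| ^ 3 := by
    intro ε hε
    have hε1 : |ε| ≤ 1 := le_trans hε (by rw [hε₀]; exact min_le_left _ _)
    have hεM : |ε| * M ≤ 1 / 2 := by
      have h2 : |ε| ≤ 1 / (2 * M) := le_trans hε (by rw [hε₀]; exact min_le_right _ _)
      calc |ε| * M ≤ (1 / (2 * M)) * M := mul_le_mul_of_nonneg_right h2 hMpos.le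
        _ = 1 / 2 := by field_simp
    have hεm₁ : |ε| * |m₁| ≤ 1 / 2 := by
      have : |ε| * |m₁| ≤ |ε| * M := by
        apply mul_le_mul_of_nonneg_left _ (abs_nonneg ε)
        rw [hM]; linarith [norm_nonneg X]
      exact this.trans hεM
    have hεX : |ε| * ‖X‖ ≤ 1 / 2 := by
      have : |ε| * ‖X‖ ≤ |ε| * M := by
        apply mul_le_mul_of_nonneg_left _ (abs_nonneg ε)
        rw [hM]; linarith [abs_nonneg m₁]
      exact this.trans hεM
    have hem : -(1/2 : ℝ) ≤ ε * m₁ := by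
      have h1 : |ε * m₁| ≤ 1/2 := by rw [abs_mul]; exact hεm₁
      linarith [neg_abs_le (ε * m₁)]
    -- lower bound via trial vector
    have hlow : 1 + ε * m₁ + ε ^ 2 * b2 - C * |ε| ^ 3 ≤ ‖A ε‖ := by
      set ψ : H := φ + (ε : ℂ) • w with hψ
      have hφψ : ⟪φ, ψ⟫_ℂ = 1 := by
        rw [hψ, inner_add_right, inner_smul_right, hφφ, hφw]; ring
      have hψφ : ⟪ψ, φ⟫_ℂ = 1 := by
        rw [hψ, inner_add_left, inner_smul_left, hφφ, hwφ]; ring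
      have hψψ : ‖ψ‖ ^ 2 = 1 + ε ^ 2 * b2 := by
        have h1 : ⟪ψ, ψ⟫_ℂ = ((1 + ε ^ 2 * b2 : ℝ) : ℂ) := by
          rw [hψ, inner_add_left, inner_add_right, inner_add_right, inner_smul_left,
            inner_smul_right, inner_smul_right, inner_smul_left, hφφ, hφw, hwφ, hww,
            Complex.conj_ofReal]
          push_cast; ring
        have h2 := InnerProductSpace.norm_sq_eq_re_inner (𝕜 := ℂ) ψ
        rw [h1, RCLike.re_to_complex, Complex.ofReal_re] at h2
        exact h2
      have hAψ : A ε ψ = φ + (ε : ℂ) • X ψ := by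
        rw [hA]
        simp only [ContinuousLinearMap.add_apply, ContinuousLinearMap.smul_apply,
          ContinuousLinearMap.smulRight_apply, innerSL_apply_apply, hφψ, one_smul]
      have hψXψ : ⟪ψ, X ψ⟫_ℂ = ((m₁ + 2 * ε * b2 : ℝ) : ℂ)
          + ((ε ^ 2 : ℝ) : ℂ) * ⟪w, X w⟫_ℂ := by
        rw [hψ]
        rw [map_add, ContinuousLinearMap.map_smul, inner_add_left, inner_add_right,
          inner_add_right, inner_smul_left, inner_smul_right, inner_smul_right,
          inner_smul_left, hφX, hφXw, hwX, Complex.conj_ofReal]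
        push_cast; ring
      have hipA : ⟪ψ, A ε ψ⟫_ℂ = ((1 + ε * m₁ + 2 * ε ^ 2 * b2 : ℝ) : ℂ)
          + ((ε ^ 3 : ℝ) : ℂ) * ⟪w, X w⟫_ℂ := by
        rw [hAψ, inner_add_right, inner_smul_right, hψφ, hψXψ]
        push_cast; ring
      set r : ℝ := (⟪w, X w⟫_ℂ).re with hr
      have habsr : |r| ≤ ‖X‖ * b2 := by
        have h1 : ‖⟪w, X w⟫_ℂ‖ ≤ ‖w‖ * ‖X w‖ := norm_inner_le_norm _ _
        have h2 : ‖X w‖ ≤ ‖X‖ * ‖w‖ := X.le_opNorm w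
        have h3 : |r| ≤ ‖⟪w, X w⟫_ℂ‖ := by
          rw [hr]; exact Complex.abs_re_le_norm _
        have h5 : ‖w‖ * ‖X w‖ ≤ ‖X‖ * b2 := by
          calc ‖w‖ * ‖X w‖ ≤ ‖w‖ * (‖X‖ * ‖w‖) :=
                mul_le_mul_of_nonneg_left h2 (norm_nonneg w)
            _ = ‖X‖ * ‖w‖ ^ 2 := by ring
            _ = ‖X‖ * b2 := by rw [hwnorm]
        linarith
      have hre : (⟪ψ, A ε ψ⟫_ℂ).re = 1 + ε * m₁ + 2 * ε ^ 2 * b2 + ε ^ 3 * r := by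
        rw [hipA, Complex.add_re, Complex.ofReal_re, Complex.re_ofReal_mul, hr]
      have hub : (⟪ψ, A ε ψ⟫_ℂ).re ≤ ‖A ε‖ * ‖ψ‖ ^ 2 := by
        calc (⟪ψ, A ε ψ⟫_ℂ).re ≤ ‖⟪ψ, A ε ψ⟫_ℂ‖ := by
              exact Complex.re_le_norm _
          _ ≤ ‖ψ‖ * ‖A ε ψ‖ := norm_inner_le_norm _ _
          _ ≤ ‖ψ‖ * (‖A ε‖ * ‖ψ‖) := by
              apply mul_le_mul_of_nonneg_left ((A ε).le_opNorm ψ) (norm_nonneg ψ)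
          _ = ‖A ε‖ * ‖ψ‖ ^ 2 := by ring
      have hmain : 1 + ε * m₁ + 2 * ε ^ 2 * b2 + ε ^ 3 * r ≤ ‖A ε‖ * (1 + ε ^ 2 * b2) := by
        rw [← hψψ, ← hre]; exact hub
      have hs : (0 : ℝ) < 1 + ε ^ 2 * b2 := by
        have := mul_nonneg (sq_nonneg ε) hb2nn
        linarith
      have k1 : ε ^ 3 * (m₁ * b2) ≤ |ε| ^ 3 * (|m₁| * b2) := by
        calc ε ^ 3 * (m₁ * b2) ≤ |ε ^ 3 * (m₁ * b2)| := le_abs_self _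
          _ = |ε| ^ 3 * (|m₁| * b2) := by
              rw [abs_mul, abs_pow, abs_mul, abs_of_nonneg hb2nn]
      have k2 : ε ^ 4 * b2 ^ 2 ≤ |ε| ^ 3 * b2 ^ 2 := by
        have h4 : ε ^ 4 ≤ |ε| ^ 3 := by
          have h40 : |ε| ^ 4 = ε ^ 4 := by
            rw [← abs_pow]; exact abs_of_nonneg (by positivity)
          calc ε ^ 4 = |ε| ^ 3 * |ε| := by rw [← h40]; ring
            _ ≤ |ε| ^ 3 * 1 := mul_le_mul_of_nonneg_left hε1 (by positivity)
            _ = |ε| ^ 3 := mul_one _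
        exact mul_le_mul_of_nonneg_right h4 (sq_nonneg b2)
      have k3 : -(|ε| ^ 3 * (‖X‖ * b2)) ≤ ε ^ 3 * r := by
        have h1 : |ε ^ 3 * r| ≤ |ε| ^ 3 * (‖X‖ * b2) := by
          rw [abs_mul, abs_pow]
          exact mul_le_mul_of_nonneg_left habsr (by positivity)
        linarith [neg_abs_le (ε ^ 3 * r)]
      have k4 : (0:ℝ) ≤ C * |ε| ^ 3 * (ε ^ 2 * b2) := by positivity
      have hpoly : (1 + ε * m₁ + ε ^ 2 * b2 - C * |ε| ^ 3) * (1 + ε ^ 2 * b2)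
          ≤ 1 + ε * m₁ + 2 * ε ^ 2 * b2 + ε ^ 3 * r := by
        have hCge : ‖X‖ * b2 + |m₁| * b2 + b2 ^ 2 ≤ C := by
          rw [hC]; linarith [mul_nonneg hb2nn hMpos.le]
        have h5 : (0:ℝ) ≤ |ε| ^ 3 := by positivity
        have kC : (‖X‖ * b2 + |m₁| * b2 + b2 ^ 2) * |ε| ^ 3 ≤ C * |ε| ^ 3 :=
          mul_le_mul_of_nonneg_right hCge h5
        linarith [k1, k2, k3, k4, kC]
      have := hpoly.trans hmain
      exact le_of_mul_le_mul_right this hs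
    -- upper bound via eigen-decomposition
    have hup : ‖A ε‖ ≤ 1 + ε * m₁ + ε ^ 2 * b2 + C * |ε| ^ 3 := by
      have hc0 : (0:ℝ) ≤ 1 + ε * m₁ + ε ^ 2 * b2 + C * |ε| ^ 3 := by
        have : (0:ℝ) ≤ ε ^ 2 * b2 := by positivity
        have h2 : (0:ℝ) ≤ C * |ε| ^ 3 := by positivity
        linarith
      have hAsa : IsSelfAdjoint (A ε) := by
        rw [ContinuousLinearMap.isSelfAdjoint_iff_isSymmetric]
        intro x y
        rw [hA]
        simp only [ContinuousLinearMap.coe_coe, ContinuousLinearMap.add_apply,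
          ContinuousLinearMap.smul_apply, ContinuousLinearMap.smulRight_apply,
          innerSL_apply_apply, inner_add_left, inner_add_right, inner_smul_left,
          inner_smul_right, inner_conj_symm, Complex.conj_ofReal]
        rw [hsym x y]
        ring
      refine aux_norm_le (A ε) hAsa hc0 fun χ hχ => ?_
      set u : ℂ := ⟪φ, χ⟫_ℂ with hu
      set v : H := χ - u • φ with hv
      have hχeq : χ = u • φ + v := by rw [hv]; abel
      have hφv : ⟪φ, v⟫_ℂ = 0 := by
        simp [hv, inner_sub_right, inner_smul_right, hφφ, hφ, hu]
      have hvφ : ⟪v, φ⟫_ℂ = 0 := by rw [← inner_conj_symm, hφv, map_zero]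
      clear_value u v
      have hcu : (starRingEnd ℂ) u * u = ((‖u‖ ^ 2 : ℝ) : ℂ) := by
        rw [mul_comm, Complex.mul_conj]
        norm_cast
        rw [Complex.normSq_eq_norm_sq]
      have hcu2 : (starRingEnd ℂ) u * u = ((‖u‖ : ℝ) : ℂ) ^ 2 := by
        rw [hcu]; push_cast; ring
      have hnorm : ‖u‖ ^ 2 + ‖v‖ ^ 2 = 1 := by
        have h1 : ⟪χ, χ⟫_ℂ = ((‖u‖ ^ 2 : ℝ) : ℂ) + ⟪v, v⟫_ℂ := by
          conv_lhs => rw [hχeq]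
          rw [inner_add_left, inner_add_right, inner_add_right, inner_smul_left,
            inner_smul_right, inner_smul_right, inner_smul_left, hφφ, hφv, hvφ]
          push_cast
          linear_combination hcu2
        have h2 := InnerProductSpace.norm_sq_eq_re_inner (𝕜 := ℂ) χ
        rw [h1, hχ, RCLike.re_to_complex, Complex.add_re, Complex.ofReal_re, one_pow] at h2
        have h3 := InnerProductSpace.norm_sq_eq_re_inner (𝕜 := ℂ) v
        rw [RCLike.re_to_complex] at h3
        rw [← h3] at h2
        linarith
      have hu1 : ‖u‖ ≤ 1 := by
        have h5 := norm_inner_le_norm (𝕜 := ℂ) φ χ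
        rw [hφ, hχ, one_mul] at h5
        rw [hu]; exact h5
      have hPχ : ((innerSL ℂ φ).smulRight φ) χ = u • φ := by
        simp only [ContinuousLinearMap.smulRight_apply, innerSL_apply_apply, hu]
      have hχφ : ⟪χ, φ⟫_ℂ = (starRingEnd ℂ) u := by rw [← inner_conj_symm, hu]
      have hipA : ⟪χ, A ε χ⟫_ℂ = ((‖u‖ ^ 2 : ℝ) : ℂ) + ((ε : ℝ) : ℂ) * ⟪χ, X χ⟫_ℂ := by
        rw [hA]
        simp only [ContinuousLinearMap.add_apply, ContinuousLinearMap.smul_apply]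
        rw [inner_add_right, hPχ, inner_smul_right, inner_smul_right, hχφ, mul_comm u _, hcu]
      have hreA : (⟪χ, A ε χ⟫_ℂ).re = ‖u‖ ^ 2 + ε * (⟪χ, X χ⟫_ℂ).re := by
        rw [hipA, Complex.add_re, Complex.ofReal_re, Complex.re_ofReal_mul]
      have hXre : |(⟪χ, X χ⟫_ℂ).re| ≤ ‖X‖ := by
        have h1 : |(⟪χ, X χ⟫_ℂ).re| ≤ ‖⟪χ, X χ⟫_ℂ‖ := by
          exact Complex.abs_re_le_norm _
        have h4 : ‖⟪χ, X χ⟫_ℂ‖ ≤ ‖X‖ := by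
          calc ‖⟪χ, X χ⟫_ℂ‖ ≤ ‖χ‖ * ‖X χ‖ := norm_inner_le_norm _ _
            _ = ‖X χ‖ := by rw [hχ, one_mul]
            _ ≤ ‖X‖ * ‖χ‖ := X.le_opNorm χ
            _ = ‖X‖ := by rw [hχ, mul_one]
        exact h1.trans h4
      -- decompose ⟪χ, X χ⟫
      have hφXv : ⟪φ, X v⟫_ℂ = ⟪w, v⟫_ℂ := by
        rw [← hsym, hXφw, inner_add_left, inner_smul_left, hφv]; ring
      have hvXφ : ⟪v, X φ⟫_ℂ = ⟪v, w⟫_ℂ := by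
        rw [hXφw, inner_add_right, inner_smul_right, hvφ]; ring
      have hreX : (⟪χ, X χ⟫_ℂ).re = ‖u‖ ^ 2 * m₁ + 2 * (u * ⟪v, w⟫_ℂ).re
          + (⟪v, X v⟫_ℂ).re := by
        have h1 : ⟪χ, X χ⟫_ℂ = ((‖u‖ ^ 2 * m₁ : ℝ) : ℂ)
            + ((starRingEnd ℂ) (u * ⟪v, w⟫_ℂ) + u * ⟪v, w⟫_ℂ) + ⟪v, X v⟫_ℂ := by
          conv_lhs => rw [hχeq]
          rw [map_add, ContinuousLinearMap.map_smul, inner_add_left, inner_add_right,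
            inner_add_right, inner_smul_left, inner_smul_right, inner_smul_right,
            inner_smul_left, hφX, hφXv, hvXφ]
          rw [map_mul, inner_conj_symm]
          push_cast
          linear_combination (m₁ : ℂ) * hcu2
        rw [h1, Complex.add_re, Complex.add_re, Complex.ofReal_re, Complex.add_re,
          Complex.conj_re]
        ring
      set q : ℝ := (u * ⟪v, w⟫_ℂ).re with hq
      set p : ℝ := (⟪v, X v⟫_ℂ).re with hp
      have habsq : |q| ≤ ‖u‖ * (‖v‖ * ‖w‖) := by
        have h1 : |q| ≤ ‖u * ⟪v, w⟫_ℂ‖ := by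
          rw [hq]; exact Complex.abs_re_le_norm _
        rw [norm_mul] at h1
        have h2 : ‖⟪v, w⟫_ℂ‖ ≤ ‖v‖ * ‖w‖ := norm_inner_le_norm _ _
        calc |q| ≤ ‖u‖ * ‖⟪v, w⟫_ℂ‖ := h1
          _ ≤ ‖u‖ * (‖v‖ * ‖w‖) := mul_le_mul_of_nonneg_left h2 (norm_nonneg u)
      clear_value q p
      have habsp : |p| ≤ ‖X‖ * ‖v‖ ^ 2 := by
        have h1 : |p| ≤ ‖⟪v, X v⟫_ℂ‖ := by
          rw [hp]; exact Complex.abs_re_le_norm _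
        have h2 : ‖⟪v, X v⟫_ℂ‖ ≤ ‖v‖ * ‖X v‖ := norm_inner_le_norm _ _
        have h3 : ‖X v‖ ≤ ‖X‖ * ‖v‖ := X.le_opNorm v
        nlinarith [norm_nonneg v, norm_nonneg X]
      rw [hreA]
      rw [abs_le]
      constructor
      · -- lower
        have h1 : |ε * (⟪χ, X χ⟫_ℂ).re| ≤ 1/2 := by
          rw [abs_mul]
          calc |ε| * |(⟪χ, X χ⟫_ℂ).re| ≤ |ε| * ‖X‖ :=
                mul_le_mul_of_nonneg_left hXre (abs_nonneg ε)
            _ ≤ 1/2 := hεX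
        have h2 : (0:ℝ) ≤ ε ^ 2 * b2 := by positivity
        have h3 : (0:ℝ) ≤ C * |ε| ^ 3 := by positivity
        linarith [neg_abs_le (ε * (⟪χ, X χ⟫_ℂ).re), sq_nonneg ‖u‖]
      · -- upper
        rw [hreX]
        set s : ℝ := ‖v‖ with hs
        set W : ℝ := ‖w‖ with hW
        have hs0 : 0 ≤ s := norm_nonneg v
        have hW0 : 0 ≤ W := norm_nonneg w
        have hU2 : ‖u‖ ^ 2 = 1 - s ^ 2 := by rw [hs]; linarith
        set δ : ℝ := |ε| * (|m₁| + ‖X‖) with hδ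
        have hδ0 : 0 ≤ δ := by positivity
        have hδhalf : δ ≤ 1/2 := by
          have : δ ≤ |ε| * M := by
            rw [hδ, hM]
            apply mul_le_mul_of_nonneg_left _ (abs_nonneg ε)
            linarith
          linarith
        have kquad : 2 * |ε| * s * W - (1 - δ) * s ^ 2 ≤ |ε| ^ 2 * W ^ 2 * (1 + 2 * δ) :=
          quad_aux hs0 hW0 (abs_nonneg ε) hδ0 hδhalf
        have km : ε * (‖u‖ ^ 2 * m₁) ≤ ε * m₁ + |ε| * |m₁| * s ^ 2 := by
          have h1 : ε * (‖u‖ ^ 2 * m₁) - ε * m₁ = -(ε * m₁ * s ^ 2) := by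
            rw [hU2]; ring
          have h2 : |ε * m₁ * s ^ 2| = |ε| * |m₁| * s ^ 2 := by
            rw [abs_mul, abs_mul, abs_of_nonneg (sq_nonneg s)]
          have h3 := neg_abs_le (ε * m₁ * s ^ 2)
          linarith [le_abs_self (ε * m₁ * s ^ 2)]
        have kq : ε * (2 * q) ≤ 2 * |ε| * s * W := by
          have h1 : |ε * (2 * q)| ≤ 2 * |ε| * (s * W) := by
            rw [abs_mul, abs_mul]
            have : |q| ≤ s * W := by
              calc |q| ≤ ‖u‖ * (s * W) := habsq
                _ ≤ 1 * (s * W) := by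
                    apply mul_le_mul_of_nonneg_right hu1 (by positivity)
                _ = s * W := one_mul _
            calc |ε| * (|(2:ℝ)| * |q|) ≤ |ε| * (2 * (s * W)) := by
                  rw [abs_two]
                  apply mul_le_mul_of_nonneg_left _ (abs_nonneg ε)
                  linarith
              _ = 2 * |ε| * (s * W) := by ring
          calc ε * (2 * q) ≤ |ε * (2 * q)| := le_abs_self _
            _ ≤ 2 * |ε| * (s * W) := h1
            _ = 2 * |ε| * s * W := by ring
        have kp : ε * p ≤ |ε| * (‖X‖ * s ^ 2) := by
          calc ε * p ≤ |ε * p| := le_abs_self _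
            _ = |ε| * |p| := abs_mul _ _
            _ ≤ |ε| * (‖X‖ * s ^ 2) := mul_le_mul_of_nonneg_left habsp (abs_nonneg ε)
        have khigher : |ε| ^ 2 * W ^ 2 * (2 * δ) ≤ C * |ε| ^ 3 := by
          have hWb : W ^ 2 = b2 := hwnorm
          have h1 : |ε| ^ 2 * W ^ 2 * (2 * δ) = 2 * b2 * (|m₁| + ‖X‖) * |ε| ^ 3 := by
            rw [hWb, hδ]; ring
          have h2 : 2 * b2 * (|m₁| + ‖X‖) ≤ C := by
            rw [hC, hM]
            linarith [mul_nonneg hb2nn (abs_nonneg m₁), mul_nonneg hb2nn (norm_nonneg X),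
              sq_nonneg b2, mul_nonneg (norm_nonneg X) hb2nn,
              mul_nonneg (abs_nonneg m₁) hb2nn, hb2nn]
          rw [h1]
          exact mul_le_mul_of_nonneg_right h2 (by positivity)
        have hδs : δ * s ^ 2 = |ε| * |m₁| * s ^ 2 + |ε| * ‖X‖ * s ^ 2 := by
          rw [hδ]; ring
        have hEW : |ε| ^ 2 * W ^ 2 = ε ^ 2 * b2 := by rw [sq_abs, hW, hwnorm]
        linarith [kquad, km, kq, kp, khigher, hδs, hEW, hU2]
    rw [abs_le]
    constructor
    · linarith
    · linarith
  -- assemble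
  have hbigO : (fun ε : ℝ => ‖A ε‖ - (1 + ε * m₁ + ε ^ 2 * b2))
      =O[𝓝 0] (fun ε : ℝ => ε ^ 2 * ε) := by
    rw [isBigO_iff]
    refine ⟨C, ?_⟩
    rw [Metric.eventually_nhds_iff]
    refine ⟨ε₀, hε₀pos, fun {y} hy => ?_⟩
    have h1 : |y| ≤ ε₀ := by
      rw [Real.dist_eq, sub_zero] at hy
      exact hy.le
    have h2 := hkey y h1
    rw [Real.norm_eq_abs, Real.norm_eq_abs]
    have h3 : |y ^ 2 * y| = |y| ^ 3 := by
      rw [abs_mul, abs_pow]; ring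
    rw [h3]
    exact h2
  have hsmall : (fun ε : ℝ => ε ^ 2 * ε) =o[𝓝 0] (fun ε : ℝ => ε ^ 2) := by
    have h1 : (fun ε : ℝ => ε) =o[𝓝 0] (fun _ : ℝ => (1:ℝ)) := by
      rw [isLittleO_one_iff]
      exact tendsto_id
    have h2 := (isBigO_refl (fun ε : ℝ => ε ^ 2) (𝓝 0)).mul_isLittleO h1
    simpa using h2
  exact hbigO.trans_isLittleO hsmall
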